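/- The independence polynomials of the centipedes satisfy the recurrence I(W_n,x) = (1+x)·I(W_{n-1},x) + x(1+x)·I(W_{n-2},x) for n ≥ 2, with I(W_0,x)=1 and I(W_1,x)=1+2x. -/

import Mathlib

open Polynomial Finset

noncomputable def indepPoly {V : Type*} [Finite V] (G : SimpleGraph V) : Polynomial ℝ :=
  haveI := Fintype.ofFinite V
  haveI := Classical.decPred fun s : Finset V => ∀ u ∈ s, ∀ v ∈ s, ¬G.Adj u v
  ∑ s ∈ Finset.univ.filter (fun s : Finset V => ∀ u ∈ s, ∀ v ∈ s, ¬G.Adj u v), X ^ s.card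

/-- The `n`-centipede: a path on `n` vertices `(i, false)` with a pendant vertex
`(i, true)` attached to each path vertex. -/
def centipede (n : ℕ) : SimpleGraph (Fin n × Bool) :=
  SimpleGraph.fromRel (fun a b =>
    (a.2 = false ∧ b.2 = false ∧ (a.1 : ℕ) + 1 = (b.1 : ℕ)) ∨
    (a.1 = b.1 ∧ a.2 = false ∧ b.2 = true))

def Indep (n : ℕ) (s : Finset (Fin n × Bool)) : Prop :=
  ∀ u ∈ s, ∀ v ∈ s, ¬(centipede n).Adj u v

open Classical in
noncomputable def Apoly (n : ℕ) : Polynomial ℝ :=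
  ∑ s ∈ Finset.univ.filter (fun s : Finset (Fin n × Bool) => Indep n s), X ^ s.card

open Classical in
noncomputable def Bpoly (n : ℕ) : Polynomial ℝ :=
  ∑ s ∈ Finset.univ.filter (fun s : Finset (Fin n × Bool) =>
      Indep n s ∧ ∀ v ∈ s, ¬(v.2 = false ∧ (v.1 : ℕ) + 1 = n)), X ^ s.card

lemma indepPoly_eq (n : ℕ) : indepPoly (centipede n) = Apoly n := by
  rw [indepPoly, Apoly]
  congr!

def emb (n : ℕ) : Fin n × Bool ↪ Fin (n + 1) × Bool :=
  Fin.castSuccEmb.prodMap (Function.Embedding.refl Bool)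

lemma emb_apply (n : ℕ) (u : Fin n × Bool) : emb n u = (u.1.castSucc, u.2) := rfl

lemma centipede_adj {n : ℕ} {a b : Fin n × Bool} :
    (centipede n).Adj a b ↔ a ≠ b ∧
      (((a.2 = false ∧ b.2 = false ∧ (a.1 : ℕ) + 1 = (b.1 : ℕ)) ∨
        (a.1 = b.1 ∧ a.2 = false ∧ b.2 = true)) ∨
       ((b.2 = false ∧ a.2 = false ∧ (b.1 : ℕ) + 1 = (a.1 : ℕ)) ∨
        (b.1 = a.1 ∧ b.2 = false ∧ a.2 = true))) := by
  rw [centipede, SimpleGraph.fromRel_adj]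

lemma adj_emb {n : ℕ} (u v : Fin n × Bool) :
    (centipede (n + 1)).Adj (emb n u) (emb n v) ↔ (centipede n).Adj u v := by
  obtain ⟨a, x⟩ := u
  obtain ⟨b, y⟩ := v
  simp only [centipede_adj, emb_apply, ne_eq, Prod.mk.injEq, Fin.castSucc_inj,
    Fin.coe_castSucc]

lemma emb_fst_ne_last {n : ℕ} (u : Fin n × Bool) : (emb n u).1 ≠ Fin.last n :=
  (Fin.castSucc_lt_last u.1).ne

lemma adj_p {n : ℕ} (v : Fin (n + 1) × Bool) :
    (centipede (n + 1)).Adj (Fin.last n, false) v ↔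
      v = (Fin.last n, true) ∨ (v.2 = false ∧ (v.1 : ℕ) + 1 = n) := by
  obtain ⟨b, y⟩ := v
  have hb := b.isLt
  simp only [centipede_adj, ne_eq, Prod.mk.injEq, Fin.val_last, Fin.ext_iff]
  cases y <;> simp <;> omega

lemma adj_q {n : ℕ} (v : Fin (n + 1) × Bool) :
    (centipede (n + 1)).Adj (Fin.last n, true) v ↔ v = (Fin.last n, false) := by
  obtain ⟨b, y⟩ := v
  have hb := b.isLt
  simp only [centipede_adj, ne_eq, Prod.mk.injEq, Fin.val_last, Fin.ext_iff]
  cases y <;> simp <;> omega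

lemma indep_map {n : ℕ} (t : Finset (Fin n × Bool)) :
    Indep (n + 1) (t.map (emb n)) ↔ Indep n t := by
  simp only [Indep, Finset.forall_mem_map, adj_emb]

lemma indep_subset {n : ℕ} {s t : Finset (Fin n × Bool)} (h : s ⊆ t) (ht : Indep n t) :
    Indep n s := fun u hu v hv => ht u (h hu) v (h hv)

lemma indep_insert {n : ℕ} (z : Fin n × Bool) (s : Finset (Fin n × Bool)) :
    Indep n (insert z s) ↔ Indep n s ∧ ∀ v ∈ s, ¬(centipede n).Adj z v := by
  classical
  simp only [Indep, Finset.mem_insert]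
  constructor
  · intro h
    exact ⟨fun u hu v hv => h u (Or.inr hu) v (Or.inr hv),
      fun v hv => h z (Or.inl rfl) v (Or.inr hv)⟩
  · rintro ⟨h1, h2⟩ u (rfl | hu) v (rfl | hv)
    · exact (centipede n).loopless.irrefl _
    · exact h2 v hv
    · exact fun h => h2 u hu h.symm
    · exact h1 u hu v hv

lemma card_default_zero : (default : Finset (Fin 0 × Bool)).card = 0 :=
  Finset.card_eq_zero.mpr (Finset.eq_empty_of_isEmpty _)

lemma Apoly_zero : Apoly 0 = 1 := by
  classical
  rw [Apoly]
  have h : ∀ s : Finset (Fin 0 × Bool), Indep 0 s := fun s u hu => Fin.elim0 u.1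
  rw [Finset.filter_true_of_mem (fun s _ => h s)]
  rw [Finset.univ_unique, Finset.sum_singleton, card_default_zero, pow_zero]

lemma Bpoly_zero : Bpoly 0 = 1 := by
  classical
  rw [Bpoly]
  have h : ∀ s : Finset (Fin 0 × Bool), Indep 0 s ∧ ∀ v ∈ s, ¬(v.2 = false ∧ (v.1 : ℕ) + 1 = 0) :=
    fun s => ⟨fun u hu => Fin.elim0 u.1, fun v hv => Fin.elim0 v.1⟩
  rw [Finset.filter_true_of_mem (fun s _ => h s)]
  rw [Finset.univ_unique, Finset.sum_singleton, card_default_zero, pow_zero]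

lemma exists_emb {n : ℕ} {w : Fin (n + 1) × Bool} (h : w.1 ≠ Fin.last n) :
    ∃ u, emb n u = w :=
  ⟨(w.1.castPred h, w.2), by simp [emb_apply, Fin.castSucc_castPred]⟩

lemma eq_map_of {n : ℕ} {s : Finset (Fin (n + 1) × Bool)}
    (hp : (Fin.last n, false) ∉ s) (hq : (Fin.last n, true) ∉ s) :
    ∃ t : Finset (Fin n × Bool), t.map (emb n) = s := by
  classical
  refine ⟨s.preimage (emb n) ((emb n).injective.injOn), ?_⟩
  ext w
  simp only [Finset.mem_map, Finset.mem_preimage]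
  constructor
  · rintro ⟨u, hu, rfl⟩; exact hu
  · intro hw
    have hne : w.1 ≠ Fin.last n := by
      intro h
      obtain ⟨a, x⟩ := w
      dsimp at h; subst h
      cases x
      · exact hp hw
      · exact hq hw
    obtain ⟨u, rfl⟩ := exists_emb hne
    exact ⟨u, hw, rfl⟩

lemma p_notmem_map {n : ℕ} (t : Finset (Fin n × Bool)) (y : Bool) :
    (Fin.last n, y) ∉ t.map (emb n) := by
  intro h
  rw [Finset.mem_map] at h
  obtain ⟨u, _, hu⟩ := h
  exact emb_fst_ne_last u (congrArg Prod.fst hu)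

open Classical in
lemma case0 (n : ℕ) :
    ∑ s ∈ Finset.univ.filter (fun s : Finset (Fin (n + 1) × Bool) =>
        Indep (n + 1) s ∧ (Fin.last n, false) ∉ s ∧ (Fin.last n, true) ∉ s), X ^ s.card
      = Apoly n := by
  classical
  rw [Apoly]
  symm
  refine Finset.sum_bij (fun t _ => t.map (emb n)) ?_ ?_ ?_ ?_
  · intro t ht
    simp only [Finset.mem_filter, Finset.mem_univ, true_and] at ht ⊢
    exact ⟨(indep_map t).2 ht, p_notmem_map t false, p_notmem_map t true⟩
  · intro t1 _ t2 _ h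
    exact Finset.map_injective _ h
  · intro s hs
    simp only [Finset.mem_filter, Finset.mem_univ, true_and] at hs
    obtain ⟨hi, hp, hq⟩ := hs
    obtain ⟨t, ht⟩ := eq_map_of hp hq
    refine ⟨t, ?_, ht⟩
    simp only [Finset.mem_filter, Finset.mem_univ, true_and]
    rw [← ht] at hi
    exact (indep_map t).1 hi
  · intro t _
    rw [Finset.card_map]

open Classical in
lemma caseQ (n : ℕ) :
    ∑ s ∈ Finset.univ.filter (fun s : Finset (Fin (n + 1) × Bool) =>
        Indep (n + 1) s ∧ (Fin.last n, false) ∉ s ∧ (Fin.last n, true) ∈ s), X ^ s.card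
      = X * Apoly n := by
  classical
  rw [Apoly, Finset.mul_sum]
  symm
  refine Finset.sum_bij (fun t _ => insert (Fin.last n, true) (t.map (emb n))) ?_ ?_ ?_ ?_
  · intro t ht
    simp only [Finset.mem_filter, Finset.mem_univ, true_and] at ht ⊢
    refine ⟨?_, ?_, Finset.mem_insert_self _ _⟩
    · rw [indep_insert]
      refine ⟨(indep_map t).2 ht, ?_⟩
      intro v hv hadj
      rw [adj_q] at hadj
      subst hadj
      exact p_notmem_map t false hv
    · rw [Finset.mem_insert]
      rintro (h | h)
      · exact absurd (congrArg Prod.snd h) (by simp)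
      · exact p_notmem_map t false h
  · intro t1 h1 t2 h2 h
    apply Finset.map_injective (emb n)
    rw [← Finset.erase_insert (p_notmem_map t1 true),
      ← Finset.erase_insert (p_notmem_map t2 true), h]
  · intro s hs
    simp only [Finset.mem_filter, Finset.mem_univ, true_and] at hs
    obtain ⟨hi, hp, hq⟩ := hs
    have hp' : (Fin.last n, false) ∉ s.erase (Fin.last n, true) :=
      fun h => hp (Finset.mem_of_mem_erase h)
    have hq' : (Fin.last n, true) ∉ s.erase (Fin.last n, true) := Finset.notMem_erase _ _
    obtain ⟨t, ht⟩ := eq_map_of hp' hq'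
    refine ⟨t, ?_, ?_⟩
    · simp only [Finset.mem_filter, Finset.mem_univ, true_and]
      apply (indep_map t).1
      rw [ht]
      exact indep_subset (Finset.erase_subset _ _) hi
    · rw [ht, Finset.insert_erase hq]
  · intro t _
    rw [Finset.card_insert_of_notMem (p_notmem_map t true), Finset.card_map, pow_succ,
      mul_comm]

open Classical in
lemma caseP (n : ℕ) :
    ∑ s ∈ Finset.univ.filter (fun s : Finset (Fin (n + 1) × Bool) =>
        Indep (n + 1) s ∧ (Fin.last n, false) ∈ s), X ^ s.card
      = X * Bpoly n := by
  classical
  rw [Bpoly, Finset.mul_sum]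
  symm
  refine Finset.sum_bij (fun t _ => insert (Fin.last n, false) (t.map (emb n))) ?_ ?_ ?_ ?_
  · intro t ht
    simp only [Finset.mem_filter, Finset.mem_univ, true_and] at ht ⊢
    obtain ⟨hti, htc⟩ := ht
    refine ⟨?_, Finset.mem_insert_self _ _⟩
    rw [indep_insert]
    refine ⟨(indep_map t).2 hti, ?_⟩
    intro v hv hadj
    rw [adj_p] at hadj
    rcases hadj with h | ⟨h2, h1⟩
    · subst h
      exact p_notmem_map t true hv
    · rw [Finset.mem_map] at hv
      obtain ⟨u, hu, rfl⟩ := hv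
      exact htc u hu ⟨h2, by simpa [emb_apply] using h1⟩
  · intro t1 h1 t2 h2 h
    apply Finset.map_injective (emb n)
    rw [← Finset.erase_insert (p_notmem_map t1 false),
      ← Finset.erase_insert (p_notmem_map t2 false), h]
  · intro s hs
    simp only [Finset.mem_filter, Finset.mem_univ, true_and] at hs
    obtain ⟨hi, hp⟩ := hs
    have hadjpq : (centipede (n + 1)).Adj (Fin.last n, false) (Fin.last n, true) := by
      rw [adj_p]; left; rfl
    have hq : (Fin.last n, true) ∉ s := fun hq => hi _ hp _ hq hadjpq
    have hp' : (Fin.last n, false) ∉ s.erase (Fin.last n, false) := Finset.notMem_erase _ _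
    have hq' : (Fin.last n, true) ∉ s.erase (Fin.last n, false) :=
      fun h => hq (Finset.mem_of_mem_erase h)
    obtain ⟨t, ht⟩ := eq_map_of hp' hq'
    refine ⟨t, ?_, ?_⟩
    · simp only [Finset.mem_filter, Finset.mem_univ, true_and]
      constructor
      · apply (indep_map t).1
        rw [ht]
        exact indep_subset (Finset.erase_subset _ _) hi
      · rintro u hu ⟨h2, h1⟩
        have hmem : emb n u ∈ s := by
          have : emb n u ∈ t.map (emb n) := Finset.mem_map_of_mem _ hu
          rw [ht] at this
          exact Finset.mem_of_mem_erase this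
        apply hi _ hp _ hmem
        rw [adj_p]
        right
        exact ⟨h2, by simpa [emb_apply] using h1⟩
    · rw [ht, Finset.insert_erase hp]
  · intro t _
    rw [Finset.card_insert_of_notMem (p_notmem_map t false), Finset.card_map, pow_succ,
      mul_comm]

open Classical in
lemma Apoly_succ (n : ℕ) : Apoly (n + 1) = (1 + X) * Apoly n + X * Bpoly n := by
  classical
  conv_lhs => rw [Apoly]
  rw [← Finset.sum_filter_add_sum_filter_not
    (Finset.univ.filter (fun s : Finset (Fin (n + 1) × Bool) => Indep (n + 1) s))
    (fun s => (Fin.last n, false) ∈ s)]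
  rw [← Finset.sum_filter_add_sum_filter_not
    (Finset.filter (fun s => ¬(Fin.last n, false) ∈ s)
      (Finset.univ.filter (fun s : Finset (Fin (n + 1) × Bool) => Indep (n + 1) s)))
    (fun s => (Fin.last n, true) ∈ s)]
  simp only [Finset.filter_filter, and_assoc]
  rw [caseP n, caseQ n, case0 n]
  ring

open Classical in
lemma Bpoly_succ (n : ℕ) : Bpoly (n + 1) = (1 + X) * Apoly n := by
  classical
  conv_lhs => rw [Bpoly]
  have hfilter : Finset.filter (fun s : Finset (Fin (n + 1) × Bool) =>
        Indep (n + 1) s ∧ ∀ v ∈ s, ¬(v.2 = false ∧ (v.1 : ℕ) + 1 = n + 1)) Finset.univ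
      = Finset.filter (fun s => Indep (n + 1) s ∧ ¬(Fin.last n, false) ∈ s) Finset.univ := by
    apply Finset.filter_congr
    intro s _
    apply and_congr_right
    intro _
    constructor
    · intro h hp
      exact h _ hp ⟨rfl, by simp⟩
    · rintro hp v hv ⟨h2, h1⟩
      have hveq : v = (Fin.last n, false) :=
        Prod.ext (Fin.ext (by simp only [Fin.val_last]; omega)) h2
      exact hp (hveq ▸ hv)
  rw [hfilter]
  rw [← Finset.sum_filter_add_sum_filter_not
    (Finset.filter (fun s : Finset (Fin (n + 1) × Bool) =>
      Indep (n + 1) s ∧ ¬(Fin.last n, false) ∈ s) Finset.univ)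
    (fun s => (Fin.last n, true) ∈ s)]
  simp only [Finset.filter_filter, and_assoc]
  rw [caseQ n, case0 n]
  ring

theorem centipede_recurrence :
    indepPoly (centipede 0) = 1 ∧ indepPoly (centipede 1) = 1 + 2 * X ∧
    ∀ n : ℕ, 2 ≤ n →
      indepPoly (centipede n) =
        (1 + X) * indepPoly (centipede (n - 1)) +
          X * (1 + X) * indepPoly (centipede (n - 2)) := by
  refine ⟨?_, ?_, ?_⟩
  · rw [indepPoly_eq, Apoly_zero]
  · rw [indepPoly_eq]
    have h := Apoly_succ 0
    rw [Apoly_zero, Bpoly_zero] at h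
    rw [h]; ring
  · intro n hn
    obtain ⟨m, rfl⟩ : ∃ m, n = m + 2 := ⟨n - 2, by omega⟩
    have h1 : m + 2 - 1 = m + 1 := by omega
    have h2 : m + 2 - 2 = m := by omega
    rw [h1, h2, indepPoly_eq, indepPoly_eq, indepPoly_eq, Apoly_succ (m + 1), Bpoly_succ m]
    ring
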